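/- For $t > 2$ and $\tau > 0$: $\frac{1}{t} - \frac{e^{\tau/(t+\tau)}}{t+\tau} \geq \frac{\tau^2}{2t(t+\tau)^2}$. -/

import Mathlib

noncomputable def q (t : ℝ) : ℝ := (t - Real.sqrt (t ^ 2 - 4)) / 2

noncomputable def u : ℕ → ℝ → ℝ
  | 0, _ => 1
  | 1, x => x
  | (n + 2), x => x * u (n + 1) x - u n x

lemma exp_cubic_bound {x : ℝ} (h1 : 0 ≤ x) (h2 : x ≤ 1) :
    Real.exp x ≤ 1 + x + x ^ 2 / 2 + x ^ 3 / 2 := by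
  have h := Real.exp_bound' h1 h2 (n := 3) (by norm_num)
  simp only [Finset.sum_range_succ, Finset.sum_range_zero] at h
  norm_num [Nat.factorial] at h
  nlinarith [pow_nonneg h1 3]

theorem stmt11 (t τ : ℝ) (ht : 2 < t) (hτ : 0 < τ) :
    τ ^ 2 / (2 * t * (t + τ) ^ 2) ≤ 1 / t - Real.exp (τ / (t + τ)) / (t + τ) := by
  have ht0 : 0 < t := by linarith
  have hs : 0 < t + τ := by linarith
  set x : ℝ := τ / (t + τ) with hx
  have hx0 : 0 ≤ x := by positivity
  have hx1 : x ≤ 1 := by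
    rw [hx, div_le_one hs]; linarith
  have hexp := exp_cubic_bound hx0 hx1
  have hstep : Real.exp x / (t + τ) ≤ (1 + x + x ^ 2 / 2 + x ^ 3 / 2) / (t + τ) := by
    gcongr
  have key : τ ^ 2 / (2 * t * (t + τ) ^ 2) ≤
      1 / t - (1 + x + x ^ 2 / 2 + x ^ 3 / 2) / (t + τ) := by
    rw [hx, div_le_iff₀ (by positivity), sub_mul]
    field_simp
    have h4 := pow_pos hτ 4
    ring_nf
    nlinarith [mul_pos (pow_pos hτ 4) (pow_pos ht0 6), mul_pos (pow_pos hτ 5) (pow_pos ht0 5),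
      mul_pos (pow_pos hτ 6) (pow_pos ht0 4), mul_pos (pow_pos hτ 7) (pow_pos ht0 3),
      mul_pos (pow_pos hτ 8) (pow_pos ht0 2), mul_pos (pow_pos hτ 9) ht0]
  linarith
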